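/- Let N ≥ 2, K > 0 and 0 < b ≤ 2/log N < K, set k_n = ⌊K n log n⌋ and c_{k_n} = C + a log n · N^{b log n} with C ≥ 0, a > 0. Consider the modified random graph on Ω_N in which each pair of distinct points at hierarchical distance j with k_n < j ≤ k_{n+1} is joined independently by an edge with probability c_{k_n}/N^{2 k_{n+1}}. Then percolation does not occur in this modified random graph. -/

import Mathlib

open MeasureTheory ProbabilityTheory Filter

/-- The hierarchical group of order `N`: sequences with values in `{0, ..., N-1}`
(encoded as `ZMod N`), all but finitely many entries zero, with componentwise
addition mod `N`. -/
abbrev HierGroup (N : ℕ) := ℕ →₀ ZMod N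

/-- The hierarchical distance: `0` if `x = y`, and otherwise the largest index
(counted starting from `1`) where `x` and `y` differ. -/
noncomputable def hdist {N : ℕ} (x y : HierGroup N) : ℕ :=
  (x - y).support.sup fun i => i + 1

lemma hdist_comm {N : ℕ} (x y : HierGroup N) : hdist x y = hdist y x := by
  unfold hdist
  rw [← neg_sub y x, Finsupp.support_neg]

/-- The random graph determined by an edge configuration `ω`:
`x` and `y` are adjacent iff they are distinct and the edge `s(x,y)` is open. -/
def graphOf {V : Type*} {Ω : Type*} (E : Sym2 V → Ω → Bool) (ω : Ω) : SimpleGraph V where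
  Adj x y := x ≠ y ∧ E s(x, y) ω = true
  symm := by
    constructor
    intro x y h
    refine ⟨h.1.symm, ?_⟩
    rw [Sym2.eq_swap]
    exact h.2
  loopless := ⟨fun x h => h.1 rfl⟩

/-- `x` lies in an infinite cluster (connected component) of `G`. -/
def InInfiniteCluster {V : Type*} (G : SimpleGraph V) (x : V) : Prop :=
  {y | G.Reachable x y}.Infinite

/-- `G` has exactly one infinite connected component. -/
def UniqueInfiniteCluster {V : Type*} (G : SimpleGraph V) : Prop :=
  ∃! S : Set V, (∃ x, S = {y | G.Reachable x y}) ∧ S.Infinite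

/-- The edge probabilities of the hierarchical random graph `G_N`: two distinct
points at hierarchical distance `k` are joined with probability
`min (c k / N ^ (k * (1 + δ))) 1`. -/
def EdgeProbOK (N : ℕ) (δ : ℝ) (c : ℕ → ℝ) {Ω : Type*} [MeasurableSpace Ω]
    (μ : Measure Ω) (E : Sym2 (HierGroup N) → Ω → Bool) : Prop :=
  ∀ x y : HierGroup N, x ≠ y →
    μ {ω | E s(x, y) ω = true} =
      ENNReal.ofReal (min (c (hdist x y) / (N : ℝ) ^ ((hdist x y : ℝ) * (1 + δ))) 1)

/-- The `k`-ball containing `0` in the hierarchical group. -/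
def hball (N : ℕ) (k : ℕ) : Set (HierGroup N) := {y | hdist 0 y ≤ k}

/-- The `(j, l]`-annulus around `0` in the hierarchical group. -/
def hannulus (N : ℕ) (j l : ℕ) : Set (HierGroup N) :=
  {y | j < hdist 0 y ∧ hdist 0 y ≤ l}

/-- The restriction of a graph to a set `S` of vertices: only edges with both
endpoints in `S` are kept. -/
def restrictTo {V : Type*} (G : SimpleGraph V) (S : Set V) : SimpleGraph V where
  Adj a b := G.Adj a b ∧ a ∈ S ∧ b ∈ S
  symm := ⟨fun a b h => ⟨h.1.symm, h.2.2, h.2.1⟩⟩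
  loopless := ⟨fun a h => G.loopless.irrefl a h.1⟩

/-- The cluster of `x` inside the `k`-ball `B_k` containing `0`, using only
edges between points of `B_k`. -/
def clusterIn (N : ℕ) (G : SimpleGraph (HierGroup N)) (k : ℕ) (x : HierGroup N) :
    Set (HierGroup N) :=
  {y | (restrictTo G (hball N k)).Reachable x y}

/-- `S` is a largest cluster of the ball `B_k` containing `0` (in the graph `G`
restricted to `B_k`). -/
def IsLargestCluster (N : ℕ) (G : SimpleGraph (HierGroup N)) (k : ℕ)
    (S : Set (HierGroup N)) : Prop :=
  (∃ x ∈ hball N k, S = clusterIn N G k x) ∧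
    ∀ x ∈ hball N k, (clusterIn N G k x).ncard ≤ S.ncard

/-- The hierarchical scales `k_n = ⌊K n log n⌋`. -/
noncomputable def kseq (K : ℝ) (n : ℕ) : ℕ := ⌊K * n * Real.log n⌋₊

/- ### Auxiliary lemmas -/

section Aux

open Topology

lemma hdist_zero_left' {N : ℕ} (y : HierGroup N) :
    hdist 0 y = y.support.sup fun i => i + 1 := by
  unfold hdist; rw [zero_sub, Finsupp.support_neg]

lemma hdist_zero_le_iff' {N : ℕ} (y : HierGroup N) (k : ℕ) :
    hdist 0 y ≤ k ↔ ∀ i ∈ y.support, i < k := by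
  rw [hdist_zero_left', Finset.sup_le_iff]
  simp only [Nat.lt_iff_add_one_le]

lemma hdist_pos_ne' {N : ℕ} (x y : HierGroup N) (h : 0 < hdist x y) : x ≠ y := by
  intro he; subst he; simp [hdist] at h

lemma hdist_eq_of_far' {N : ℕ} (x y : HierGroup N) (k : ℕ)
    (hx : hdist 0 x ≤ k) (hy : k < hdist 0 y) : hdist x y = hdist 0 y := by
  have hxs : ∀ i ∈ x.support, i < k := (hdist_zero_le_iff' x k).1 hx
  have hyne : y.support.Nonempty := by
    by_contra h
    rw [Finset.not_nonempty_iff_eq_empty] at h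
    rw [hdist_zero_left', h] at hy
    simp at hy
  obtain ⟨i₀, hi₀m, hi₀⟩ := Finset.exists_mem_eq_sup y.support hyne (fun i => i + 1)
  rw [hdist_zero_left'] at hy ⊢
  apply le_antisymm
  · apply Finset.sup_le
    intro i hi
    rcases lt_or_ge i k with h1 | h1
    · omega
    · have hxi : x i = 0 := by
        by_contra hxi
        exact absurd (hxs i (Finsupp.mem_support_iff.2 hxi)) (not_lt.2 h1)
      have h2 : (x - y) i ≠ 0 := Finsupp.mem_support_iff.1 hi
      rw [Finsupp.sub_apply, hxi, zero_sub, neg_ne_zero] at h2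
      exact Finset.le_sup (f := fun i => i + 1) (Finsupp.mem_support_iff.2 h2)
  · have hik : k ≤ i₀ := by omega
    have hx0 : x i₀ = 0 := by
      by_contra hxi
      exact absurd (hxs i₀ (Finsupp.mem_support_iff.2 hxi)) (not_lt.2 hik)
    have h2 : (x - y) i₀ ≠ 0 := by
      rw [Finsupp.sub_apply, hx0, zero_sub, neg_ne_zero]
      exact Finsupp.mem_support_iff.1 hi₀m
    rw [hi₀]
    exact Finset.le_sup (f := fun i => i + 1) (Finsupp.mem_support_iff.2 h2)

lemma hball_injOn' {N : ℕ} (k : ℕ) :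
    Set.InjOn (fun (y : HierGroup N) => fun i : Fin k => y i) (hball N k) := by
  intro y hy z hz h
  ext i
  rcases lt_or_ge i k with h1 | h1
  · exact congrFun h ⟨i, h1⟩
  · have hy0 : y i = 0 := by
      by_contra hc
      have := (hdist_zero_le_iff' y k).1 hy i (Finsupp.mem_support_iff.2 hc)
      omega
    have hz0 : z i = 0 := by
      by_contra hc
      have := (hdist_zero_le_iff' z k).1 hz i (Finsupp.mem_support_iff.2 hc)
      omega
    rw [hy0, hz0]

lemma hball_finite' {N : ℕ} (hN : 0 < N) (k : ℕ) : (hball N k).Finite := by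
  haveI : NeZero N := ⟨by omega⟩
  exact Set.Finite.of_finite_image (Set.toFinite _) (hball_injOn' k)

lemma hball_card_le' {N : ℕ} (hN : 0 < N) (k : ℕ) :
    (hball_finite' hN k).toFinset.card ≤ N ^ k := by
  haveI : NeZero N := ⟨by omega⟩
  classical
  rw [← Set.ncard_coe_finset, Set.Finite.coe_toFinset]
  calc (hball N k).ncard = ((fun (y : HierGroup N) => fun i : Fin k => y i) '' hball N k).ncard :=
        (Set.ncard_image_of_injOn (hball_injOn' k)).symm
    _ ≤ (Set.univ : Set (Fin k → ZMod N)).ncard := by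
        apply Set.ncard_le_ncard (Set.subset_univ _) Set.finite_univ
    _ = N ^ k := by
        rw [Set.ncard_univ, Nat.card_eq_fintype_card]
        simp [ZMod.card]

lemma cross_edge' {V : Type*} (G : SimpleGraph V) (P : V → Prop) :
    ∀ {u v : V}, G.Walk u v → P u → ¬ P v →
    ∃ a b, P a ∧ ¬ P b ∧ G.Adj a b := by
  intro u v w
  induction w with
  | nil => intro h1 h2; exact absurd h1 h2
  | @cons a b' c h w ih =>
    intro h1 h2
    by_cases hp : P b'
    · exact ih hp h2
    · exact ⟨a, b', h1, hp, h⟩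

lemma infinite_cluster_escape' {V : Type*} (G : SimpleGraph V) (x : V)
    (h : {y | G.Reachable x y}.Infinite) (S : Set V) (hS : S.Finite) :
    ∃ y, G.Reachable x y ∧ y ∉ S := by
  by_contra hc
  push_neg at hc
  exact h (hS.subset hc)

lemma log_nat_nonneg' (n : ℕ) : 0 ≤ Real.log n := by
  rcases Nat.eq_zero_or_pos n with h | h
  · simp [h]
  · exact Real.log_nonneg (by exact_mod_cast h)

lemma log_nat_mono' {m n : ℕ} (h : m ≤ n) : Real.log m ≤ Real.log n := by
  rcases Nat.eq_zero_or_pos m with h0 | h0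
  · simpa [h0] using log_nat_nonneg' n
  · exact Real.log_le_log (by exact_mod_cast h0) (by exact_mod_cast h)

lemma kseq_mono' {K : ℝ} (hK : 0 ≤ K) : Monotone (kseq K) := by
  intro m n h
  apply Nat.floor_mono
  have h1 : K * m ≤ K * n := by
    apply mul_le_mul_of_nonneg_left _ hK; exact_mod_cast h
  exact mul_le_mul h1 (log_nat_mono' h) (log_nat_nonneg' m)
    (mul_nonneg hK (Nat.cast_nonneg n))

lemma kseq_tendsto' {K : ℝ} (hK : 0 < K) : Tendsto (kseq K) atTop atTop := by
  apply tendsto_nat_floor_atTop.comp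
  apply tendsto_atTop_mono' atTop (f₁ := fun n : ℕ => K * n)
  · filter_upwards [eventually_ge_atTop 3] with n hn
    have h1 : (1:ℝ) ≤ Real.log n := by
      rw [Real.le_log_iff_exp_le (by positivity)]
      calc Real.exp 1 ≤ 3 := by
            linarith [Real.exp_one_lt_d9]
        _ ≤ (n:ℝ) := by exact_mod_cast hn
    nlinarith [mul_pos hK (show (0:ℝ) < n by positivity)]
  · exact tendsto_natCast_atTop_atTop.const_mul_atTop hK

lemma kseq_le' (K : ℝ) (hK : 0 ≤ K) (n : ℕ) : (kseq K n : ℝ) ≤ K * n * Real.log n :=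
  Nat.floor_le (mul_nonneg (mul_nonneg hK (Nat.cast_nonneg n)) (log_nat_nonneg' n))

lemma kseq_diff' (K : ℝ) (hK : 0 ≤ K) (n : ℕ) :
    K * Real.log n - 1 ≤ (kseq K (n+1) : ℝ) - kseq K n := by
  have h1 : K * ((n:ℝ)+1) * Real.log ((n:ℝ)+1) - 1 < (kseq K (n+1) : ℝ) := by
    have := Nat.sub_one_lt_floor (K * ((n:ℝ)+1) * Real.log ((n:ℝ)+1))
    have he : kseq K (n+1) = ⌊K * ((n:ℝ)+1) * Real.log ((n:ℝ)+1)⌋₊ := by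
      unfold kseq; push_cast; ring_nf
    rw [he]
    linarith
  have h2 : (kseq K n : ℝ) ≤ K * n * Real.log n := kseq_le' K hK n
  have h3 : K * n * Real.log n + K * Real.log n ≤ K * ((n:ℝ)+1) * Real.log ((n:ℝ)+1) := by
    have hl : Real.log n ≤ Real.log ((n:ℝ)+1) := by
      have := log_nat_mono' (Nat.le_succ n); push_cast at this; exact this
    have hKn : (0:ℝ) ≤ K * (n+1) := by positivity
    nlinarith [log_nat_nonneg' n]
  linarith

lemma kseq_step' (K : ℝ) (hK : 0 < K) :
    ∃ n₀ : ℕ, 2 ≤ n₀ ∧ ∀ m, n₀ ≤ m → kseq K m + 4 ≤ kseq K (m+1) := by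
  refine ⟨⌈Real.exp (5 / K)⌉₊ + 2, by omega, fun m hm => ?_⟩
  have hme : Real.exp (5 / K) ≤ (m:ℝ) := by
    calc Real.exp (5 / K) ≤ (⌈Real.exp (5 / K)⌉₊ : ℝ) := Nat.le_ceil _
      _ ≤ (m:ℝ) := by exact_mod_cast le_trans (by omega) hm
  have hlog : 5 / K ≤ Real.log m := by
    rw [Real.le_log_iff_exp_le (lt_of_lt_of_le (Real.exp_pos _) hme)]
    exact hme
  have h5 : 5 ≤ K * Real.log m := by
    rw [div_le_iff₀ hK] at hlog; linarith
  have := kseq_diff' K hK.le m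
  have : (kseq K m : ℝ) + 4 ≤ (kseq K (m+1) : ℝ) := by linarith
  exact_mod_cast this

lemma rpow_log_swap' {x y t : ℝ} (hx : 0 < x) (hy : 0 < y) :
    x ^ (t * Real.log y) = y ^ (t * Real.log x) := by
  rw [Real.rpow_def_of_pos hx, Real.rpow_def_of_pos hy]
  ring_nf

lemma main_tendsto' (N : ℕ) (hN : 2 ≤ N) (K b C a : ℝ)
    (hb : 0 < b) (hb2 : b ≤ 2 / Real.log N) (hK : 2 / Real.log N < K)
    (hC : 0 ≤ C) (ha : 0 < a) :
    Tendsto (fun n : ℕ => (C + a * Real.log n * (N:ℝ) ^ (b * Real.log n)) *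
      ((N:ℝ) ^ (kseq K n) / (N:ℝ) ^ (kseq K (n+1)))) atTop (𝓝 0) := by
  have hN1 : (1:ℝ) < (N:ℝ) := by exact_mod_cast hN
  have hN0 : (0:ℝ) < (N:ℝ) := by linarith
  have hlogN : 0 < Real.log N := Real.log_pos hN1
  have hKpos : 0 < K := lt_trans (by positivity) hK
  have hbK : b < K := lt_of_le_of_lt hb2 hK
  set s := K * Real.log N with hs
  set t := (K - b) * Real.log N with ht
  have hspos : 0 < s := by positivity
  have htpos : 0 < t := by
    apply mul_pos _ hlogN; linarith
  set G : ℕ → ℝ := fun n => (N:ℝ) * C * (n:ℝ) ^ (-s) + (N:ℝ) * a * (Real.log n * (n:ℝ) ^ (-t))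
    with hG
  have key : ∀ n : ℕ, 1 ≤ n →
      (C + a * Real.log n * (N:ℝ) ^ (b * Real.log n)) *
        ((N:ℝ) ^ (kseq K n) / (N:ℝ) ^ (kseq K (n+1))) ≤ G n := by
    intro n hn
    have hnpos : (0:ℝ) < n := by exact_mod_cast hn
    have hstep : ((N:ℝ) ^ (kseq K n) / (N:ℝ) ^ (kseq K (n+1))) ≤ (N:ℝ) * (n:ℝ) ^ (-s) := by
      have h1 : ((N:ℝ) ^ (kseq K n) / (N:ℝ) ^ (kseq K (n+1)))
          = (N:ℝ) ^ ((kseq K n : ℝ) - (kseq K (n+1) : ℝ)) := by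
        rw [Real.rpow_sub hN0, Real.rpow_natCast, Real.rpow_natCast]
      rw [h1]
      have h2 : (kseq K n : ℝ) - (kseq K (n+1) : ℝ) ≤ 1 - K * Real.log n := by
        have := kseq_diff' K hKpos.le n
        linarith
      calc (N:ℝ) ^ ((kseq K n : ℝ) - (kseq K (n+1) : ℝ))
          ≤ (N:ℝ) ^ (1 - K * Real.log n) :=
            Real.rpow_le_rpow_of_exponent_le hN1.le h2
        _ = (N:ℝ) * (N:ℝ) ^ (-(K * Real.log n)) := by
            rw [sub_eq_add_neg, Real.rpow_add hN0, Real.rpow_one]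
        _ = (N:ℝ) * (n:ℝ) ^ (-s) := by
            rw [show -(K * Real.log (n:ℝ)) = (-K) * Real.log (n:ℝ) by ring,
              rpow_log_swap' hN0 hnpos, hs]
            ring_nf
    have hcn : 0 ≤ C + a * Real.log n * (N:ℝ) ^ (b * Real.log n) := by
      have := log_nat_nonneg' n
      positivity
    have hq : 0 ≤ (N:ℝ) ^ (kseq K n) / (N:ℝ) ^ (kseq K (n+1)) := by positivity
    calc (C + a * Real.log n * (N:ℝ) ^ (b * Real.log n)) *
        ((N:ℝ) ^ (kseq K n) / (N:ℝ) ^ (kseq K (n+1)))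
        ≤ (C + a * Real.log n * (N:ℝ) ^ (b * Real.log n)) * ((N:ℝ) * (n:ℝ) ^ (-s)) :=
          mul_le_mul_of_nonneg_left hstep hcn
      _ = (N:ℝ) * C * (n:ℝ) ^ (-s)
          + (N:ℝ) * a * (Real.log n * ((n:ℝ) ^ (b * Real.log N) * (n:ℝ) ^ (-s))) := by
          rw [rpow_log_swap' hN0 hnpos]
          ring
      _ = G n := by
          rw [hG]
          have : (n:ℝ) ^ (b * Real.log N) * (n:ℝ) ^ (-s) = (n:ℝ) ^ (-t) := by
            rw [← Real.rpow_add hnpos]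
            congr 1
            rw [hs, ht]; ring
          rw [this]
  have hGto : Tendsto G atTop (𝓝 0) := by
    have h1 : Tendsto (fun n : ℕ => (n:ℝ) ^ (-s)) atTop (𝓝 0) :=
      (tendsto_rpow_neg_atTop hspos).comp tendsto_natCast_atTop_atTop
    have h2 : Tendsto (fun n : ℕ => Real.log n * (n:ℝ) ^ (-t)) atTop (𝓝 0) := by
      have h3 : Tendsto (fun x : ℝ => Real.log x / x ^ t) atTop (𝓝 0) :=
        (isLittleO_log_rpow_atTop htpos).tendsto_div_nhds_zero
      have h4 : Tendsto (fun x : ℝ => Real.log x * x ^ (-t)) atTop (𝓝 0) := by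
        apply h3.congr'
        filter_upwards [eventually_gt_atTop 0] with x hx
        rw [Real.rpow_neg hx.le, div_eq_mul_inv]
      exact h4.comp tendsto_natCast_atTop_atTop
    have := ((h1.const_mul ((N:ℝ) * C)).add (h2.const_mul ((N:ℝ) * a)))
    simpa using this
  apply squeeze_zero' (t₀ := atTop) ?_ ?_ hGto
  · filter_upwards [eventually_ge_atTop 1] with n hn
    have := log_nat_nonneg' n
    positivity
  · filter_upwards [eventually_ge_atTop 1] with n hn
    exact key n hn

lemma c_ratio' (N : ℕ) (hN : 2 ≤ N) (b C a : ℝ)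
    (hb : 0 < b) (hb2 : b ≤ 2 / Real.log N) (hC : 0 ≤ C) (ha : 0 < a)
    (m : ℕ) (hm : 2 ≤ m) :
    C + a * Real.log (m+1) * (N:ℝ) ^ (b * Real.log (m+1)) ≤
      8 * (C + a * Real.log m * (N:ℝ) ^ (b * Real.log m)) := by
  have hN1 : (1:ℝ) < (N:ℝ) := by exact_mod_cast hN
  have hN0 : (0:ℝ) < (N:ℝ) := by linarith
  have hlogN : 0 < Real.log N := Real.log_pos hN1
  have hm0 : (0:ℝ) < (m:ℝ) := by exact_mod_cast (by omega : 0 < m)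
  have hm1 : (1:ℝ) ≤ (m:ℝ) := by exact_mod_cast (by omega : 1 ≤ m)
  have hmp0 : (0:ℝ) < ((m:ℝ)+1) := by linarith
  set p := b * Real.log N with hp
  have hp0 : 0 ≤ p := by positivity
  have hp2 : p ≤ 2 := by
    rw [hp]
    calc b * Real.log N ≤ (2 / Real.log N) * Real.log N :=
          mul_le_mul_of_nonneg_right hb2 hlogN.le
      _ = 2 := by field_simp
  have e1 : (N:ℝ) ^ (b * Real.log ((m:ℝ)+1)) = ((m:ℝ)+1) ^ p := by
    rw [rpow_log_swap' hN0 hmp0, hp]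
  have e2 : (N:ℝ) ^ (b * Real.log (m:ℝ)) = (m:ℝ) ^ p := by
    rw [rpow_log_swap' hN0 hm0, hp]
  rw [e1, e2]
  have hl : Real.log ((m:ℝ)+1) ≤ 2 * Real.log m := by
    have hm2 : (2:ℝ) ≤ (m:ℝ) := by exact_mod_cast hm
    have h1 : ((m:ℝ)+1) ≤ (m:ℝ)^2 := by nlinarith
    calc Real.log ((m:ℝ)+1) ≤ Real.log ((m:ℝ)^2) := Real.log_le_log hmp0 h1
      _ = 2 * Real.log m := by rw [Real.log_pow]; push_cast; ring
  have hr : ((m:ℝ)+1) ^ p ≤ 4 * (m:ℝ) ^ p := by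
    calc ((m:ℝ)+1) ^ p ≤ (2*(m:ℝ)) ^ p := by
          apply Real.rpow_le_rpow (by linarith) (by linarith) hp0
      _ = 2 ^ p * (m:ℝ) ^ p := Real.mul_rpow (by norm_num) hm0.le
      _ ≤ 4 * (m:ℝ) ^ p := by
          have h2 : (2:ℝ) ^ p ≤ 2 ^ (2:ℝ) :=
            Real.rpow_le_rpow_of_exponent_le (by norm_num) hp2
          have h4 : (2:ℝ) ^ (2:ℝ) = 4 := by
            rw [show (2:ℝ) = ((2:ℕ):ℝ) by norm_num, Real.rpow_natCast]; norm_num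
          have := Real.rpow_nonneg hm0.le p
          nlinarith
  have hlog0 : 0 ≤ Real.log (m:ℝ) := log_nat_nonneg' m
  have hlp0 : 0 ≤ Real.log ((m:ℝ)+1) := by
    apply Real.log_nonneg; linarith
  have hrp0 : 0 ≤ ((m:ℝ)+1)^p := Real.rpow_nonneg hmp0.le p
  have hmpw0 : 0 ≤ (m:ℝ)^p := Real.rpow_nonneg hm0.le p
  nlinarith [mul_le_mul hl hr hrp0 (by linarith : 0 ≤ 2 * Real.log (m:ℝ))]

end Aux

section Main
open Topology
open scoped ENNReal

set_option maxHeartbeats 2000000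

/-- The modified model in which pairs at distance `j ∈ (k_n, k_{n+1}]` are
joined with probability `c_{k_n} / N^{2 k_{n+1}}`, where
`c_{k_n} = C + a log n · N^{b log n}` and `0 < b ≤ 2 / log N < K`: percolation
does not occur. -/
theorem modified_model_no_percolation
    (N : ℕ) (hN : 2 ≤ N) (K b C a : ℝ)
    (hb : 0 < b) (hb2 : b ≤ 2 / Real.log N) (hK : 2 / Real.log N < K)
    (hC : 0 ≤ C) (ha : 0 < a)
    (Ω : Type) [MeasurableSpace Ω] (μ : Measure Ω) [IsProbabilityMeasure μ]
    (E : Sym2 (HierGroup N) → Ω → Bool)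
    (hE : ∀ e, Measurable (E e))
    (hind : iIndepFun E μ)
    (hprob : ∀ x y : HierGroup N, x ≠ y → ∀ n : ℕ, 1 ≤ n →
      kseq K n < hdist x y → hdist x y ≤ kseq K (n + 1) →
      μ {ω | E s(x, y) ω = true} =
        ENNReal.ofReal (min ((C + a * Real.log n * (N : ℝ) ^ (b * Real.log n)) /
          (N : ℝ) ^ (2 * kseq K (n + 1))) 1)) :
    μ {ω | InInfiniteCluster (graphOf E ω) 0} = 0 := by
  classical
  have hN1 : (1:ℝ) < (N:ℝ) := by exact_mod_cast hN
  have hN0r : (0:ℝ) < (N:ℝ) := by linarith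
  have hN0 : 0 < N := by omega
  have hlogN : 0 < Real.log N := Real.log_pos hN1
  have hKpos : 0 < K := lt_trans (by positivity) hK
  set c : ℕ → ℝ := fun m => C + a * Real.log m * (N:ℝ) ^ (b * Real.log m) with hc
  have hc0 : ∀ m : ℕ, 0 ≤ c m := by
    intro m
    have := log_nat_nonneg' m
    rw [hc]
    positivity
  have hkmono : Monotone (kseq K) := kseq_mono' hKpos.le
  obtain ⟨n₀, hn₀2, hstep⟩ := kseq_step' K hKpos
  set Bfin : ℕ → Finset (HierGroup N) := fun n => (hball_finite' hN0 (kseq K n)).toFinset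
    with hBfin
  set Afin : ℕ → Finset (HierGroup N) := fun m =>
    (hball_finite' hN0 (kseq K (m+1))).toFinset.filter (fun y => kseq K m < hdist 0 y)
    with hAfin
  set Ev : HierGroup N → HierGroup N → Set Ω := fun x y => {ω | E s(x, y) ω = true} with hEv
  set U : ℕ → ℕ → Set Ω := fun n m => ⋃ x ∈ Bfin n, ⋃ y ∈ Afin m, Ev x y with hU
  -- Step 1: inclusion into crossing events
  have hincl : ∀ n : ℕ, {ω | InInfiniteCluster (graphOf E ω) 0} ⊆ ⋃ j : ℕ, U n (n + j) := by
    intro n ω hω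
    simp only [Set.mem_setOf_eq, InInfiniteCluster] at hω
    obtain ⟨y, hyr, hyout⟩ := infinite_cluster_escape' (graphOf E ω) 0 hω
      (hball N (kseq K n)) (hball_finite' hN0 (kseq K n))
    obtain ⟨w⟩ := hyr
    have h0 : hdist (0 : HierGroup N) (0 : HierGroup N) ≤ kseq K n := by
      simp [hdist]
    have hy' : ¬ (hdist 0 y ≤ kseq K n) := hyout
    obtain ⟨x, z, hx, hz, hadj⟩ :=
      cross_edge' (graphOf E ω) (fun v => hdist 0 v ≤ kseq K n) w h0 hy'
    push_neg at hz
    have hex : ∃ M, hdist 0 z ≤ kseq K M :=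
      ((kseq_tendsto' hKpos).eventually_ge_atTop (hdist 0 z)).exists
    set M := Nat.find hex with hMdef
    have hM : hdist 0 z ≤ kseq K M := Nat.find_spec hex
    have hMn : n + 1 ≤ M := by
      by_contra h
      push_neg at h
      have : kseq K M ≤ kseq K n := hkmono (by omega)
      omega
    set m := M - 1 with hm
    have hM1 : M = m + 1 := by omega
    have hkm : kseq K m < hdist 0 z := by
      have := Nat.find_min hex (show m < M by omega)
      omega
    have hnm : n ≤ m := by omega
    refine Set.mem_iUnion.2 ⟨m - n, ?_⟩
    have hmeq : n + (m - n) = m := by omega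
    rw [hmeq]
    rw [hU]
    simp only [Set.mem_iUnion]
    refine ⟨x, ?_, z, ?_, hadj.2⟩
    · rw [hBfin]
      simp only [Set.Finite.mem_toFinset]
      exact hx
    · rw [hAfin]
      simp only [Finset.mem_filter, Set.Finite.mem_toFinset]
      constructor
      · rw [← hM1]; exact hM
      · exact hkm
  -- Step 2: per-block measure bound
  have hblock : ∀ n m : ℕ, n₀ ≤ n → n ≤ m →
      μ (U n m) ≤ ENNReal.ofReal (c m * (N:ℝ)^(kseq K n) / (N:ℝ)^(kseq K (m+1))) := by
    intro n m hn hnm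
    have hm1 : 1 ≤ m := by omega
    have hterm : ∀ x ∈ Bfin n, ∀ y ∈ Afin m,
        μ (Ev x y) ≤ ENNReal.ofReal (c m / (N:ℝ)^(2 * kseq K (m+1))) := by
      intro x hx y hy
      have hxb : hdist 0 x ≤ kseq K n := by
        rw [hBfin] at hx
        simpa only [Set.Finite.mem_toFinset, hball, Set.mem_setOf_eq] using hx
      rw [hAfin] at hy
      simp only [Finset.mem_filter, Set.Finite.mem_toFinset] at hy
      have hyb : hdist 0 y ≤ kseq K (m+1) := hy.1
      have hyl : kseq K m < hdist 0 y := hy.2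
      have hd : hdist x y = hdist 0 y :=
        hdist_eq_of_far' x y (kseq K m) (le_trans hxb (hkmono hnm)) hyl
      have hne : x ≠ y := hdist_pos_ne' x y (by omega)
      have heq := hprob x y hne m hm1 (by omega) (by omega)
      rw [hEv]
      simp only []
      rw [heq]
      exact ENNReal.ofReal_le_ofReal (min_le_left _ _)
    calc μ (U n m) ≤ ∑ x ∈ Bfin n, μ (⋃ y ∈ Afin m, Ev x y) := by
          rw [hU]; exact measure_biUnion_finset_le _ _
      _ ≤ ∑ x ∈ Bfin n, ∑ y ∈ Afin m, μ (Ev x y) :=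
          Finset.sum_le_sum (fun x _ => measure_biUnion_finset_le _ _)
      _ ≤ ∑ _x ∈ Bfin n, ∑ _y ∈ Afin m, ENNReal.ofReal (c m / (N:ℝ)^(2 * kseq K (m+1))) :=
          Finset.sum_le_sum (fun x hx => Finset.sum_le_sum (fun y hy => hterm x hx y hy))
      _ = (Bfin n).card * ((Afin m).card * ENNReal.ofReal (c m / (N:ℝ)^(2 * kseq K (m+1)))) := by
          simp [Finset.sum_const, nsmul_eq_mul, mul_assoc]
      _ ≤ (N:ℝ≥0∞)^(kseq K n) * ((N:ℝ≥0∞)^(kseq K (m+1)) *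
            ENNReal.ofReal (c m / (N:ℝ)^(2 * kseq K (m+1)))) := by
          apply mul_le_mul' ?_ (mul_le_mul' ?_ le_rfl)
          · calc ((Bfin n).card : ℝ≥0∞) ≤ ((N ^ kseq K n : ℕ) : ℝ≥0∞) := by
                  exact_mod_cast hball_card_le' hN0 (kseq K n)
              _ = (N:ℝ≥0∞)^(kseq K n) := by push_cast; ring
          · calc ((Afin m).card : ℝ≥0∞) ≤ (((hball_finite' hN0 (kseq K (m+1))).toFinset.card : ℕ) : ℝ≥0∞) := by
                  rw [hAfin]
                  exact_mod_cast Finset.card_filter_le _ _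
              _ ≤ ((N ^ kseq K (m+1) : ℕ) : ℝ≥0∞) := by
                  exact_mod_cast hball_card_le' hN0 (kseq K (m+1))
              _ = (N:ℝ≥0∞)^(kseq K (m+1)) := by push_cast; ring
      _ = ENNReal.ofReal (c m * (N:ℝ)^(kseq K n) / (N:ℝ)^(kseq K (m+1))) := by
          rw [show (N:ℝ≥0∞) = ENNReal.ofReal (N:ℝ) by rw [ENNReal.ofReal_natCast],
            ← ENNReal.ofReal_pow hN0r.le, ← ENNReal.ofReal_pow hN0r.le,
            ← ENNReal.ofReal_mul (by positivity), ← ENNReal.ofReal_mul (by positivity)]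
          congr 1
          have hpow : (N:ℝ)^(2 * kseq K (m+1)) = (N:ℝ)^(kseq K (m+1)) * (N:ℝ)^(kseq K (m+1)) := by
            rw [two_mul, pow_add]
          rw [hpow]
          have hNe : (N:ℝ)^(kseq K (m+1)) ≠ 0 := by positivity
          field_simp
  -- Step 3: geometric summation and conclusion
  set T : ℕ → ℕ → ℝ := fun n m => c m * (N:ℝ)^(kseq K n) / (N:ℝ)^(kseq K (m+1)) with hT
  have hT0 : ∀ n m, 0 ≤ T n m := by
    intro n m
    simp only [hT]
    have := hc0 m
    positivity
  have hcr : ∀ m : ℕ, 2 ≤ m → c (m+1) ≤ 8 * c m := by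
    intro m hm
    have h1 := c_ratio' N hN b C a hb hb2 hC ha m hm
    have h2 : c (m+1) = C + a * Real.log ((m:ℝ)+1) * (N:ℝ)^(b * Real.log ((m:ℝ)+1)) := by
      simp only [hc]
      push_cast
      ring_nf
    rw [h2, hc]
    exact h1
  have hhalf : ∀ n m : ℕ, n₀ ≤ n → n ≤ m → T n (m+1) ≤ (1/2) * T n m := by
    intro n m hn hnm
    have hm2 : 2 ≤ m := le_trans hn₀2 (le_trans hn hnm)
    have hden : (16:ℝ) * (N:ℝ)^(kseq K (m+1)) ≤ (N:ℝ)^(kseq K (m+1+1)) := by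
      have h4 : kseq K (m+1) + 4 ≤ kseq K (m+1+1) := hstep (m+1) (by omega)
      calc (16:ℝ) * (N:ℝ)^(kseq K (m+1)) ≤ (N:ℝ)^4 * (N:ℝ)^(kseq K (m+1)) := by
            have h16 : (16:ℝ) ≤ (N:ℝ)^4 := by
              calc (16:ℝ) = 2^4 := by norm_num
                _ ≤ (N:ℝ)^4 := by
                  apply pow_le_pow_left₀ (by norm_num) (by exact_mod_cast hN)
            exact mul_le_mul_of_nonneg_right h16 (by positivity)
        _ = (N:ℝ)^(kseq K (m+1) + 4) := by rw [pow_add]; ring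
        _ ≤ (N:ℝ)^(kseq K (m+1+1)) := pow_le_pow_right₀ hN1.le h4
    have hnum : c (m+1) * (N:ℝ)^(kseq K n) ≤ 8 * c m * (N:ℝ)^(kseq K n) :=
      mul_le_mul_of_nonneg_right (hcr m hm2) (by positivity)
    simp only [hT]
    have h1 : c (m+1) * (N:ℝ)^(kseq K n) / (N:ℝ)^(kseq K (m+1+1)) ≤
        (8 * c m * (N:ℝ)^(kseq K n)) / (16 * (N:ℝ)^(kseq K (m+1))) := by
      apply div_le_div₀ (by positivity) hnum (by positivity) hden
    refine le_trans h1 (le_of_eq ?_)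
    have hBne : (N:ℝ)^(kseq K (m+1)) ≠ 0 := by positivity
    field_simp
    ring
  have hgeo : ∀ n : ℕ, n₀ ≤ n → ∀ j : ℕ, T n (n+1+j) ≤ (1/2)^j * T n (n+1) := by
    intro n hn j
    induction j with
    | zero => simp
    | succ i ih =>
      have h1 : T n (n+1+i+1) ≤ (1/2) * T n (n+1+i) := hhalf n (n+1+i) hn (by omega)
      have h2 : n+1+(i+1) = n+1+i+1 := by omega
      rw [h2]
      calc T n (n+1+i+1) ≤ (1/2) * T n (n+1+i) := h1
        _ ≤ (1/2) * ((1/2)^i * T n (n+1)) := by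
            apply mul_le_mul_of_nonneg_left ih (by norm_num)
        _ = (1/2)^(i+1) * T n (n+1) := by ring
  have hsum : ∀ n : ℕ, n₀ ≤ n →
      μ {ω | InInfiniteCluster (graphOf E ω) 0} ≤ ENNReal.ofReal (17 * T n n) := by
    intro n hn
    have hn2 : 2 ≤ n := le_trans hn₀2 hn
    have h18 : T n (n+1) ≤ 8 * T n n := by
      simp only [hT]
      have hnum : c (n+1) * (N:ℝ)^(kseq K n) ≤ 8 * c n * (N:ℝ)^(kseq K n) :=
        mul_le_mul_of_nonneg_right (hcr n hn2) (by positivity)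
      have hden : (N:ℝ)^(kseq K (n+1)) ≤ (N:ℝ)^(kseq K (n+1+1)) :=
        pow_le_pow_right₀ hN1.le (hkmono (by omega))
      calc c (n+1) * (N:ℝ)^(kseq K n) / (N:ℝ)^(kseq K (n+1+1))
          ≤ (8 * c n * (N:ℝ)^(kseq K n)) / (N:ℝ)^(kseq K (n+1)) :=
            div_le_div₀ (by positivity) hnum (by positivity) hden
        _ = 8 * (c n * (N:ℝ)^(kseq K n) / (N:ℝ)^(kseq K (n+1))) := by ring
    have hhalfofReal : ENNReal.ofReal (1/2 : ℝ) = 2⁻¹ := by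
      rw [one_div, ENNReal.ofReal_inv_of_pos (by norm_num)]
      norm_num
    calc μ {ω | InInfiniteCluster (graphOf E ω) 0}
        ≤ μ (⋃ j : ℕ, U n (n+j)) := measure_mono (hincl n)
      _ ≤ ∑' j : ℕ, μ (U n (n+j)) := measure_iUnion_le _
      _ ≤ ∑' j : ℕ, ENNReal.ofReal (T n (n+j)) := by
          apply ENNReal.tsum_le_tsum
          intro j
          have := hblock n (n+j) hn (by omega)
          simpa only [hT] using this
      _ = ENNReal.ofReal (T n (n+0)) + ∑' i : ℕ, ENNReal.ofReal (T n (n+(i+1))) :=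
          tsum_eq_zero_add' ENNReal.summable
      _ ≤ ENNReal.ofReal (T n n) + ∑' i : ℕ, ENNReal.ofReal ((1/2)^i * T n (n+1)) := by
          apply add_le_add
          · exact le_of_eq (by norm_num)
          · apply ENNReal.tsum_le_tsum
            intro i
            apply ENNReal.ofReal_le_ofReal
            have h2 : n+(i+1) = n+1+i := by omega
            rw [h2]
            exact hgeo n hn i
      _ = ENNReal.ofReal (T n n) +
          (∑' i : ℕ, (ENNReal.ofReal (1/2 : ℝ))^i) * ENNReal.ofReal (T n (n+1)) := by
          congr 1
          rw [← ENNReal.tsum_mul_right]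
          congr 1
          funext i
          rw [← ENNReal.ofReal_pow (by norm_num), ← ENNReal.ofReal_mul (by positivity)]
      _ = ENNReal.ofReal (T n n) + 2 * ENNReal.ofReal (T n (n+1)) := by
          rw [hhalfofReal, ENNReal.tsum_geometric, ENNReal.one_sub_inv_two, inv_inv]
      _ ≤ ENNReal.ofReal (T n n) + 2 * ENNReal.ofReal (8 * T n n) := by
          apply add_le_add le_rfl
          apply mul_le_mul' le_rfl
          exact ENNReal.ofReal_le_ofReal h18
      _ = ENNReal.ofReal (17 * T n n) := by
          rw [show (2:ℝ≥0∞) = ENNReal.ofReal (2:ℝ) by norm_num,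
            ← ENNReal.ofReal_mul (by norm_num),
            ← ENNReal.ofReal_add (hT0 n n) (by nlinarith [hT0 n n])]
          congr 1
          ring
  have htd : Tendsto (fun n : ℕ => ENNReal.ofReal (17 * T n n)) atTop (𝓝 0) := by
    have h1 := main_tendsto' N hN K b C a hb hb2 hK hC ha
    have h2 : Tendsto (fun n : ℕ => 17 * T n n) atTop (𝓝 0) := by
      have he : (fun n : ℕ => 17 * T n n) = fun n : ℕ =>
          17 * ((C + a * Real.log n * (N:ℝ)^(b * Real.log n)) *
            ((N:ℝ)^(kseq K n) / (N:ℝ)^(kseq K (n+1)))) := by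
        funext n
        simp only [hT, hc]
        ring
      rw [he]
      simpa using h1.const_mul (17:ℝ)
    have h3 := (ENNReal.tendsto_ofReal h2 : Tendsto _ atTop (𝓝 (ENNReal.ofReal 0)))
    simpa using h3
  have hle : μ {ω | InInfiniteCluster (graphOf E ω) 0} ≤ 0 := by
    apply ge_of_tendsto htd
    filter_upwards [eventually_ge_atTop n₀] with n hn
    exact hsum n hn
  exact le_antisymm hle zero_le

end Main
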